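/- Let d ≥ 2, y₁, …, yₙ ∈ ℝ^d mutually distinct, c₁, …, cₙ ∈ ℂ \ {0}, and suppose n ≥ 1. If the function ũ(τ, e₁, e₂) = Σⱼ cⱼ·exp(τ·(e₂·yⱼ))·exp(-i·√(1+τ²)·(e₁·yⱼ)) is bounded on ℝ × US^{d-1}, then n = 1 and y₁ = 0 (so ũ ≡ c₁). -/

import Mathlib

open scoped RealInnerProductSpace

open Filter

lemma aux_exists_inner_ne_zero {d : ℕ} (s : Finset (EuclideanSpace ℝ (Fin d)))
    (hs : ∀ w ∈ s, w ≠ 0) :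
    ∃ v : EuclideanSpace ℝ (Fin d), ∀ w ∈ s, ⟪v, w⟫ ≠ 0 := by
  set p : {w // w ∈ s} → Subspace ℝ (EuclideanSpace ℝ (Fin d)) :=
    fun w => LinearMap.ker ((innerSL ℝ (w : EuclideanSpace ℝ (Fin d))) :
      EuclideanSpace ℝ (Fin d) →ₗ[ℝ] ℝ) with hp
  have hne : ⋃ i, (p i : Set (EuclideanSpace ℝ (Fin d))) ≠ Set.univ := by
    intro hcovers
    obtain ⟨i, hi⟩ := Subspace.exists_eq_top_of_iUnion_eq_univ hcovers
    have h1 : (i : EuclideanSpace ℝ (Fin d)) ∈ p i := by rw [hi]; trivial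
    have h2 : ⟪(i : EuclideanSpace ℝ (Fin d)), (i : EuclideanSpace ℝ (Fin d))⟫ = 0 := h1
    exact (inner_self_ne_zero.mpr (hs _ i.2)) h2
  obtain ⟨v, hv⟩ := Set.ne_univ_iff_exists_notMem _ |>.mp hne
  refine ⟨v, fun w hw hvw => hv ?_⟩
  exact Set.mem_iUnion.mpr ⟨⟨w, hw⟩, by
    show ⟪w, v⟫ = 0
    rw [real_inner_comm]; exact hvw⟩

/-- Case (ii) in the proof of Proposition 1: if
`ũ(τ,e₁,e₂) = ∑ⱼ cⱼ exp(τ (e₂·yⱼ)) exp(-i √(1+τ²) (e₁·yⱼ))` is bounded on `ℝ × US^{d-1}`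
(with mutually distinct `yⱼ`, nonzero `cⱼ`, `n ≥ 1`), then `n = 1` and `y₁ = 0`. -/
theorem stmt4 (d n : ℕ) (hd : 2 ≤ d) (hn : 1 ≤ n)
    (y : Fin n → EuclideanSpace ℝ (Fin d)) (hy : Function.Injective y)
    (c : Fin n → ℂ) (hc : ∀ j, c j ≠ 0)
    (hbdd : ∃ M : ℝ, ∀ (τ : ℝ) (e₁ e₂ : EuclideanSpace ℝ (Fin d)),
      ‖e₁‖ = 1 → ‖e₂‖ = 1 → ⟪e₁, e₂⟫ = 0 →
      ‖∑ j, c j * Complex.exp ((τ * ⟪e₂, y j⟫ : ℝ)) *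
        Complex.exp (-Complex.I * (Real.sqrt (1 + τ ^ 2) * ⟪e₁, y j⟫ : ℝ))‖ ≤ M) :
    n = 1 ∧ ∀ j, y j = 0 := by
  classical
  obtain ⟨M, hM⟩ := hbdd
  have key : ∀ j, y j = 0 := by
    by_contra hcon
    push_neg at hcon
    obtain ⟨k, hk⟩ := hcon
    -- pick a generic direction
    set s : Finset (EuclideanSpace ℝ (Fin d)) :=
      insert (y k) ((Finset.univ.image (fun q : Fin n × Fin n => y q.1 - y q.2)).erase 0)
      with hsdef
    have hsne : ∀ w ∈ s, w ≠ 0 := by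
      intro w hw
      rcases Finset.mem_insert.mp hw with h | h
      · rw [h]; exact hk
      · exact Finset.ne_of_mem_erase h
    obtain ⟨v, hv⟩ := aux_exists_inner_ne_zero s hsne
    have hvk : ⟪v, y k⟫ ≠ 0 := hv _ (Finset.mem_insert_self _ _)
    have hvdiff : ∀ j l : Fin n, j ≠ l → ⟪v, y j⟫ ≠ ⟪v, y l⟫ := by
      intro j l hjl heq
      have hmem : y j - y l ∈ s := by
        refine Finset.mem_insert_of_mem (Finset.mem_erase.mpr ⟨?_, ?_⟩)
        · exact sub_ne_zero.mpr fun h => hjl (hy h)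
        · exact Finset.mem_image.mpr ⟨(j, l), Finset.mem_univ _, rfl⟩
      exact hv _ hmem (by rw [inner_sub_right, heq, sub_self])
    -- fix the sign
    obtain ⟨w, hwk, hwdiff⟩ : ∃ w : EuclideanSpace ℝ (Fin d),
        0 < ⟪w, y k⟫ ∧ ∀ j l : Fin n, j ≠ l → ⟪w, y j⟫ ≠ ⟪w, y l⟫ := by
      rcases hvk.lt_or_gt with h | h
      · refine ⟨-v, by simpa [inner_neg_left] using h, fun j l hjl => ?_⟩
        simp only [inner_neg_left, ne_eq, neg_inj]
        exact hvdiff j l hjl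
      · exact ⟨v, h, hvdiff⟩
    have hw0 : w ≠ 0 := by
      intro h; rw [h] at hwk; simp at hwk
    have hwnorm : (0 : ℝ) < ‖w‖ := norm_pos_iff.mpr hw0
    set e₂ : EuclideanSpace ℝ (Fin d) := (‖w‖⁻¹ : ℝ) • w with he₂def
    have he₂ : ‖e₂‖ = 1 := by
      rw [he₂def, norm_smul, norm_inv, norm_norm, inv_mul_cancel₀ hwnorm.ne']
    set a : Fin n → ℝ := fun j => ⟪e₂, y j⟫ with hadef
    have ha : ∀ j, a j = ‖w‖⁻¹ * ⟪w, y j⟫ := fun j => real_inner_smul_left _ _ _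
    have hak : 0 < a k := by rw [ha]; positivity
    have hadist : ∀ j l : Fin n, j ≠ l → a j ≠ a l := by
      intro j l hjl heq
      rw [ha, ha] at heq
      exact hwdiff j l hjl (mul_left_cancel₀ (inv_ne_zero hwnorm.ne') heq)
    have : Nonempty (Fin n) := ⟨⟨0, hn⟩⟩
    obtain ⟨j0, -, hj0⟩ := Finset.exists_max_image Finset.univ a Finset.univ_nonempty
    have ha0 : 0 < a j0 := lt_of_lt_of_le hak (hj0 k (Finset.mem_univ k))
    have hlt : ∀ j ∈ Finset.univ.erase j0, a j < a j0 := by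
      intro j hj
      exact lt_of_le_of_ne (hj0 j (Finset.mem_univ j))
        (hadist j j0 (Finset.ne_of_mem_erase hj))
    -- an orthogonal unit vector e₁
    have he₂0 : e₂ ≠ 0 := by
      intro h; rw [h, norm_zero] at he₂; norm_num at he₂
    obtain ⟨w₁, hw₁mem, hw₁ne⟩ :
        ∃ b, b ∈ (ℝ ∙ e₂)ᗮ ∧ b ≠ 0 := by
      apply Submodule.exists_mem_ne_zero_of_ne_bot
      intro hbot
      have h1 : Module.finrank ℝ (ℝ ∙ e₂) + Module.finrank ℝ (ℝ ∙ e₂)ᗮ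
          = Module.finrank ℝ (EuclideanSpace ℝ (Fin d)) :=
        Submodule.finrank_add_finrank_orthogonal _
      rw [hbot, finrank_span_singleton he₂0, finrank_bot, finrank_euclideanSpace_fin] at h1
      omega
    have hw₁norm : (0 : ℝ) < ‖w₁‖ := norm_pos_iff.mpr hw₁ne
    set e₁ : EuclideanSpace ℝ (Fin d) := (‖w₁‖⁻¹ : ℝ) • w₁ with he₁def
    have he₁ : ‖e₁‖ = 1 := by
      rw [he₁def, norm_smul, norm_inv, norm_norm, inv_mul_cancel₀ hw₁norm.ne']
    have horth : ⟪e₁, e₂⟫ = 0 := by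
      have h0 : ⟪e₂, w₁⟫ = 0 :=
        hw₁mem e₂ (Submodule.mem_span_singleton_self e₂)
      rw [he₁def, real_inner_smul_left, real_inner_comm, h0, mul_zero]
    -- the lower bound
    have hbound : ∀ τ : ℝ, ‖c j0‖ * Real.exp (τ * a j0)
        - ∑ j ∈ Finset.univ.erase j0, ‖c j‖ * Real.exp (τ * a j) ≤ M := by
      intro τ
      have h1 := hM τ e₁ e₂ he₁ he₂ horth
      set T : Fin n → ℂ := fun j => c j * Complex.exp ((τ * ⟪e₂, y j⟫ : ℝ)) *
        Complex.exp (-Complex.I * (Real.sqrt (1 + τ ^ 2) * ⟪e₁, y j⟫ : ℝ)) with hTdef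
      have habsT : ∀ j, ‖T j‖ = ‖c j‖ * Real.exp (τ * a j) := by
        intro j
        rw [hTdef]
        simp only [norm_mul, Complex.norm_exp]
        have h2 : ((τ * ⟪e₂, y j⟫ : ℝ) : ℂ).re = τ * a j := by
          rw [Complex.ofReal_re]
        have h3 : (-Complex.I * ((Real.sqrt (1 + τ ^ 2) * ⟪e₁, y j⟫ : ℝ) : ℂ)).re = 0 := by
          simp [Complex.mul_re]
        rw [h2, h3, Real.exp_zero, mul_one]
      have hsplit : ∑ j, T j = T j0 + ∑ j ∈ Finset.univ.erase j0, T j :=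
        (Finset.add_sum_erase _ _ (Finset.mem_univ j0)).symm
      have h4 : ‖T j0‖ ≤ ‖∑ j, T j‖
          + ‖∑ j ∈ Finset.univ.erase j0, T j‖ := by
        have : T j0 = (∑ j, T j) - ∑ j ∈ Finset.univ.erase j0, T j := by
          rw [hsplit]; ring
        rw [this]
        exact norm_sub_le _ _
      have h5 : ‖∑ j ∈ Finset.univ.erase j0, T j‖
          ≤ ∑ j ∈ Finset.univ.erase j0, ‖c j‖ * Real.exp (τ * a j) := by
        refine le_trans (norm_sum_le _ _) (le_of_eq ?_)
        exact Finset.sum_congr rfl fun j _ => habsT j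
      rw [habsT j0] at h4
      linarith
    -- blow-up as τ → ∞
    have hten : Tendsto (fun τ : ℝ => ‖c j0‖ * Real.exp (τ * a j0)
        - ∑ j ∈ Finset.univ.erase j0, ‖c j‖ * Real.exp (τ * a j))
        atTop atTop := by
      have heq : (fun τ : ℝ => ‖c j0‖ * Real.exp (τ * a j0)
          - ∑ j ∈ Finset.univ.erase j0, ‖c j‖ * Real.exp (τ * a j))
          = fun τ : ℝ => Real.exp (τ * a j0) * (‖c j0‖
            - ∑ j ∈ Finset.univ.erase j0, ‖c j‖ * Real.exp (τ * (a j - a j0))) := by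
        funext τ
        rw [mul_sub, Finset.mul_sum]
        congr 1
        · ring
        · refine Finset.sum_congr rfl fun j _ => ?_
          rw [← mul_assoc, mul_comm (Real.exp (τ * a j0)) (‖c j‖), mul_assoc,
            ← Real.exp_add]
          ring_nf
      rw [heq]
      have hexp : Tendsto (fun τ : ℝ => Real.exp (τ * a j0)) atTop atTop :=
        Real.tendsto_exp_atTop.comp ((tendsto_mul_const_atTop_of_pos ha0).mpr tendsto_id)
      have hzero : Tendsto (fun τ : ℝ =>
          ∑ j ∈ Finset.univ.erase j0, ‖c j‖ * Real.exp (τ * (a j - a j0)))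
          atTop (nhds 0) := by
        have : Tendsto (fun τ : ℝ => ∑ j ∈ Finset.univ.erase j0,
            ‖c j‖ * Real.exp (τ * (a j - a j0))) atTop
            (nhds (∑ j ∈ Finset.univ.erase j0, (0 : ℝ))) := by
          refine tendsto_finset_sum _ fun j hj => ?_
          have hneg : a j - a j0 < 0 := sub_neg.mpr (hlt j hj)
          have h6 : Tendsto (fun τ : ℝ => Real.exp (τ * (a j - a j0))) atTop (nhds 0) :=
            Real.tendsto_exp_atBot.comp ((tendsto_mul_const_atBot_of_neg hneg).mpr tendsto_id)
          simpa using h6.const_mul (‖c j‖)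
        simpa using this
      have hbr : Tendsto (fun τ : ℝ => ‖c j0‖
          - ∑ j ∈ Finset.univ.erase j0, ‖c j‖ * Real.exp (τ * (a j - a j0)))
          atTop (nhds (‖c j0‖)) := by
        simpa using (tendsto_const_nhds (x := ‖c j0‖) (f := atTop)).sub hzero
      exact hexp.atTop_mul_pos (norm_pos_iff.mpr (hc j0)) hbr
    obtain ⟨τ, hτ⟩ := (hten.eventually_gt_atTop M).exists
    exact absurd (hbound τ) (not_le.mpr hτ)
  refine ⟨?_, key⟩
  have hall : ∀ i j : Fin n, i = j := fun i j => hy (by rw [key i, key j])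
  by_contra hne
  have h2 : 2 ≤ n := by omega
  have := hall ⟨0, by omega⟩ ⟨1, by omega⟩
  simp [Fin.ext_iff] at this
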